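/- For all positive integers n and k, det(C_{n+i+j})_{i,j=0}^{k-1} = det(C(k+i+j, 2j))_{i,j=0}^{n-1}, where the left matrix is k×k with entries Catalan numbers and the right matrix is n×n with binomial entries. -/

import Mathlib

open Finset
open Fin.NatCast

def bbal (r c : ℕ) : ℤ := ((2*r).choose (r+c) : ℤ) - ((2*r).choose (r+c+1) : ℤ)

def ggi (r c : ℕ) : ℤ := (-1)^(r+c) * ((r+c).choose (2*c) : ℤ)

lemma bbal_zero {r c : ℕ} (h : r < c) : bbal r c = 0 := by
  unfold bbal
  rw [Nat.choose_eq_zero_of_lt (by omega), Nat.choose_eq_zero_of_lt (by omega)]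
  simp

lemma bbal_diag (r : ℕ) : bbal r r = 1 := by
  unfold bbal
  rw [show r + r = 2*r by ring, Nat.choose_self, Nat.choose_eq_zero_of_lt (by omega)]
  simp

lemma ggi_zero {r c : ℕ} (h : r < c) : ggi r c = 0 := by
  unfold ggi
  rw [Nat.choose_eq_zero_of_lt (by omega)]
  simp

lemma pascal2 (m z : ℕ) : (m+2).choose (z+2) = m.choose z + 2 * m.choose (z+1) + m.choose (z+2) := by
  rw [Nat.choose_succ_succ (m+1) (z+1), Nat.choose_succ_succ m z, Nat.choose_succ_succ m (z+1)]
  ring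

lemma bbal_rec (r c : ℕ) : bbal (r+1) (c+1) = bbal r c + 2 * bbal r (c+1) + bbal r (c+2) := by
  unfold bbal
  rw [show 2*(r+1) = 2*r + 2 by ring, show r+1+(c+1) = (r+c)+2 by ring,
    show (r+c)+2+1 = (r+c+1)+2 by ring,
    pascal2 (2*r) (r+c), pascal2 (2*r) (r+c+1),
    show r+(c+1) = r + c + 1 by ring, show r+(c+2) = r+c+2 by ring,
    show r+c+2+1 = r+c+3 by ring,
    show (r+c+1)+1 = r+c+2 by ring, show (r+c+1)+2 = r+c+3 by ring]
  push_cast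
  ring

lemma bbal_rec0 (r : ℕ) : bbal (r+1) 0 = bbal r 0 + bbal r 1 := by
  unfold bbal
  have hs : (2*r+1).choose r = (2*r+1).choose (r+1) := by
    have := Nat.choose_symm (n := 2*r+1) (k := r+1) (by omega)
    rw [show 2*r+1-(r+1) = r by omega] at this
    exact this
  have h1 : (2*(r+1)).choose (r+1) = 2 * ((2*r).choose r + (2*r).choose (r+1)) := by
    rw [show 2*(r+1) = (2*r+1)+1 by ring, Nat.choose_succ_succ (2*r+1) r, hs,
      Nat.choose_succ_succ (2*r) r]
    ring
  have h2 : (2*(r+1)).choose (r+1+1) =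
      ((2*r).choose r + (2*r).choose (r+1)) + ((2*r).choose (r+1) + (2*r).choose (r+1+1)) := by
    rw [show 2*(r+1) = (2*r+1)+1 by ring, Nat.choose_succ_succ (2*r+1) (r+1),
      Nat.choose_succ_succ (2*r) r, Nat.choose_succ_succ (2*r) (r+1)]
  rw [show r+1+0 = r+1 by ring, show r+0 = r by ring, h1, h2]
  push_cast
  ring

lemma chmul (n m u : ℕ) (h : m + u ≤ n) :
    n.choose (m+u) * (m+u).choose m = n.choose m * (n-m).choose u := by
  have h1 : n.choose (m+u) * (m+u).factorial * (n-(m+u)).factorial = n.factorial :=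
    Nat.choose_mul_factorial_mul_factorial h
  have h2 : (m+u).choose m * m.factorial * ((m+u)-m).factorial = (m+u).factorial :=
    Nat.choose_mul_factorial_mul_factorial (by omega)
  have h3 : n.choose m * m.factorial * (n-m).factorial = n.factorial :=
    Nat.choose_mul_factorial_mul_factorial (by omega)
  have h4 : (n-m).choose u * u.factorial * ((n-m)-u).factorial = (n-m).factorial :=
    Nat.choose_mul_factorial_mul_factorial (by omega)
  rw [show (m+u)-m = u by omega] at h2
  rw [show (n-m)-u = n-(m+u) by omega] at h4
  have key : (n.choose (m+u) * (m+u).choose m) * (m.factorial * u.factorial * (n-(m+u)).factorial)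
      = (n.choose m * (n-m).choose u) * (m.factorial * u.factorial * (n-(m+u)).factorial) := by
    calc (n.choose (m+u) * (m+u).choose m) * (m.factorial * u.factorial * (n-(m+u)).factorial)
        = (n.choose (m+u)) * (((m+u).choose m) * m.factorial * u.factorial) * (n-(m+u)).factorial := by ring
      _ = n.choose (m+u) * (m+u).factorial * (n-(m+u)).factorial := by rw [h2]
      _ = n.factorial := h1
      _ = n.choose m * m.factorial * (n-m).factorial := h3.symm
      _ = n.choose m * m.factorial * ((n-m).choose u * u.factorial * (n-(m+u)).factorial) := by rw [h4]
      _ = (n.choose m * (n-m).choose u) * (m.factorial * u.factorial * (n-(m+u)).factorial) := by ring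
  exact Nat.eq_of_mul_eq_mul_right (by positivity) key

lemma sum_shift (f : ℕ → ℤ) (s r N : ℕ) (hsr : s ≤ r + 1) (hrN : r < N)
    (h0 : ∀ c, c < s → f c = 0) (h1 : ∀ c, r < c → f c = 0) :
    ∑ c ∈ Finset.range N, f c = ∑ d ∈ Finset.range (r+1-s), f (s+d) := by
  have e1 : ∑ c ∈ Finset.range N, f c = ∑ c ∈ Finset.range (r+1), f c := by
    refine (Finset.sum_subset (Finset.range_subset_range.mpr (by omega)) ?_).symm
    intro x _ hx
    simp only [Finset.mem_range] at hx
    exact h1 x (by omega)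
  have e2 : ∑ c ∈ Finset.Ico 0 s, f c = 0 := by
    refine Finset.sum_eq_zero fun x hx => ?_
    simp only [Finset.mem_Ico] at hx
    exact h0 x hx.2
  rw [e1, Finset.range_eq_Ico, ← Finset.sum_Ico_consecutive _ (Nat.zero_le s) hsr, e2, zero_add,
    Finset.sum_Ico_eq_sum_range]

lemma inner_orth (M j : ℕ) (hj : j ≤ M) :
    ∑ d ∈ Finset.range (M+1), (-1:ℤ)^d * (M.choose d : ℤ) * (d.choose j : ℤ)
      = if j = M then (-1:ℤ)^M else 0 := by
  obtain ⟨v, rfl⟩ : ∃ v, M = j + v := ⟨M - j, by omega⟩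
  have hshift := sum_shift (fun d => (-1:ℤ)^d * ((j+v).choose d : ℤ) * (d.choose j : ℤ))
    j (j+v) (j+v+1) (by omega) (by omega)
    (fun c hc => by simp [Nat.choose_eq_zero_of_lt hc])
    (fun c hc => by simp [Nat.choose_eq_zero_of_lt hc])
  rw [hshift, show j+v+1-j = v+1 by omega]
  have hterm : ∀ d ∈ Finset.range (v+1),
      (-1:ℤ)^(j+d) * ((j+v).choose (j+d) : ℤ) * ((j+d).choose j : ℤ)
        = ((-1:ℤ)^j * ((j+v).choose j : ℤ)) * ((-1:ℤ)^d * (v.choose d : ℤ)) := by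
    intro d hd
    simp only [Finset.mem_range] at hd
    have := chmul (j+v) j d (by omega)
    rw [show (j+v)-j = v by omega] at this
    have hcast : (((j+v).choose (j+d) : ℤ)) * (((j+d).choose j : ℤ))
        = ((j+v).choose j : ℤ) * (v.choose d : ℤ) := by exact_mod_cast congrArg (Nat.cast (R := ℤ)) this
    calc (-1:ℤ)^(j+d) * ((j+v).choose (j+d) : ℤ) * ((j+d).choose j : ℤ)
        = (-1:ℤ)^(j+d) * (((j+v).choose (j+d) : ℤ) * ((j+d).choose j : ℤ)) := by ring
      _ = (-1:ℤ)^(j+d) * (((j+v).choose j : ℤ) * (v.choose d : ℤ)) := by rw [hcast]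
      _ = ((-1:ℤ)^j * ((j+v).choose j : ℤ)) * ((-1:ℤ)^d * (v.choose d : ℤ)) := by
          rw [pow_add]; ring
  rw [Finset.sum_congr rfl hterm, ← Finset.mul_sum, Int.alternating_sum_range_choose]
  rcases eq_or_ne v 0 with rfl | hv
  · simp
  · rw [if_neg hv, if_neg (by omega), mul_zero]

lemma starlemma (M A : ℕ) :
    ∑ d ∈ Finset.range (M+1), (-1:ℤ)^d * (M.choose d : ℤ) * ((A+d).choose M : ℤ)
      = (-1:ℤ)^M := by
  have hvand : ∀ d, ((A+d).choose M : ℤ)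
      = ∑ kk ∈ Finset.range (M+1), (A.choose kk : ℤ) * (d.choose (M-kk) : ℤ) := by
    intro d
    have := Nat.add_choose_eq A d M
    rw [Finset.Nat.sum_antidiagonal_eq_sum_range_succ (f := fun x y => A.choose x * d.choose y)] at this
    exact_mod_cast congrArg (Nat.cast (R := ℤ)) this
  calc ∑ d ∈ Finset.range (M+1), (-1:ℤ)^d * (M.choose d : ℤ) * ((A+d).choose M : ℤ)
      = ∑ d ∈ Finset.range (M+1), ∑ kk ∈ Finset.range (M+1),
          (A.choose kk : ℤ) * ((-1:ℤ)^d * (M.choose d : ℤ) * (d.choose (M-kk) : ℤ)) := by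
        refine Finset.sum_congr rfl fun d _ => ?_
        rw [hvand d, Finset.mul_sum]
        exact Finset.sum_congr rfl fun kk _ => by ring
    _ = ∑ kk ∈ Finset.range (M+1), (A.choose kk : ℤ) *
          (∑ d ∈ Finset.range (M+1), (-1:ℤ)^d * (M.choose d : ℤ) * (d.choose (M-kk) : ℤ)) := by
        rw [Finset.sum_comm]
        exact Finset.sum_congr rfl fun kk _ => by rw [Finset.mul_sum]
    _ = (-1:ℤ)^M := by
        rw [Finset.sum_eq_single 0]
        · rw [show M - 0 = M by omega, inner_orth M M le_rfl, if_pos rfl]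
          simp
        · intro kk hkk hkk0
          simp only [Finset.mem_range] at hkk
          rw [inner_orth M (M-kk) (by omega), if_neg (by omega), mul_zero]
        · intro h
          exact absurd (Finset.mem_range.mpr (by omega)) h

lemma keyA (N r s : ℕ) (hr : r < N) (hs : s < N) :
    ∑ c ∈ Finset.range N, ggi r c * bbal c s = if r = s then (1:ℤ) else 0 := by
  rcases lt_trichotomy r s with hlt | rfl | hgt
  · rw [if_neg (by omega)]
    refine Finset.sum_eq_zero fun c _ => ?_
    rcases lt_or_ge c s with hcs | hcs
    · rw [bbal_zero hcs, mul_zero]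
    · rw [ggi_zero (by omega), zero_mul]
  · rw [if_pos rfl]
    rw [Finset.sum_eq_single r]
    · rw [bbal_diag, mul_one]
      unfold ggi
      rw [show r + r = 2*r by ring, Nat.choose_self]
      have : Even (2*r) := even_two_mul r
      simp [this.neg_one_pow]
    · intro c _ hc
      rcases lt_or_ge c r with hcr | hcr
      · rw [bbal_zero hcr, mul_zero]
      · rw [ggi_zero (by omega), zero_mul]
    · intro h; exact absurd (Finset.mem_range.mpr hr) h
  · rw [if_neg (by omega)]
    obtain ⟨m, rfl⟩ : ∃ m, r = s + m + 1 := ⟨r - s - 1, by omega⟩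
    have expand : ∀ c, ggi (s+m+1) c * bbal c s =
        (ggi (s+m+1) c * ((2*c).choose (c+s) : ℤ)) - (ggi (s+m+1) c * ((2*c).choose (c+s+1) : ℤ)) := by
      intro c; unfold bbal; ring
    rw [Finset.sum_congr rfl (fun c _ => expand c), Finset.sum_sub_distrib]
    have hF : ∑ c ∈ Finset.range N, ggi (s+m+1) c * ((2*c).choose (c+s) : ℤ) = 1 := by
      rw [sum_shift _ s (s+m+1) N (by omega) hr
        (fun c hc => by rw [Nat.choose_eq_zero_of_lt (by omega)]; simp)
        (fun c hc => by rw [ggi_zero hc, zero_mul]),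
        show s+m+1+1-s = m+2 by omega]
      have hterm : ∀ d ∈ Finset.range (m+2),
          ggi (s+m+1) (s+d) * ((2*(s+d)).choose ((s+d)+s) : ℤ)
            = ((-1:ℤ)^(s+m+1+s)) * ((-1:ℤ)^d * ((m+1).choose d : ℤ) * (((2*s+m+1)+d).choose (m+1) : ℤ)) := by
        intro d hd
        simp only [Finset.mem_range] at hd
        unfold ggi
        have hmul := chmul (s+m+1+(s+d)) (2*s+d) d (by omega)
        rw [show (2*s+d)+d = 2*(s+d) by ring, show (s+m+1+(s+d)) - (2*s+d) = m+1 by omega] at hmul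
        have hsymm : (s+m+1+(s+d)).choose (2*s+d) = (s+m+1+(s+d)).choose (m+1) := by
          have := Nat.choose_symm (n := s+m+1+(s+d)) (k := 2*s+d) (by omega)
          rw [show s+m+1+(s+d) - (2*s+d) = m+1 by omega] at this
          exact this.symm
        have hcast : ((s+m+1+(s+d)).choose (2*(s+d)) : ℤ) * ((2*(s+d)).choose ((s+d)+s) : ℤ)
            = ((s+m+1+(s+d)).choose (m+1) : ℤ) * ((m+1).choose d : ℤ) := by
          rw [show (s+d)+s = 2*s+d by ring, ← hsymm]
          exact_mod_cast congrArg (Nat.cast (R := ℤ)) hmul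
        calc (-1:ℤ)^(s+m+1+(s+d)) * ((s+m+1+(s+d)).choose (2*(s+d)) : ℤ) * ((2*(s+d)).choose ((s+d)+s) : ℤ)
            = (-1:ℤ)^(s+m+1+(s+d)) * (((s+m+1+(s+d)).choose (2*(s+d)) : ℤ) * ((2*(s+d)).choose ((s+d)+s) : ℤ)) := by ring
          _ = (-1:ℤ)^(s+m+1+(s+d)) * (((s+m+1+(s+d)).choose (m+1) : ℤ) * ((m+1).choose d : ℤ)) := by rw [hcast]
          _ = ((-1:ℤ)^(s+m+1+s)) * ((-1:ℤ)^d * ((m+1).choose d : ℤ) * (((2*s+m+1)+d).choose (m+1) : ℤ)) := by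
              rw [show s+m+1+(s+d) = (s+m+1+s)+d by ring, pow_add,
                show s+m+1+s+d = 2*s+m+1+d by ring]
              ring
      rw [Finset.sum_congr rfl hterm, ← Finset.mul_sum, starlemma (m+1) (2*s+m+1)]
      rw [← pow_add, show s+m+1+s+(m+1) = 2*(s+m+1) by ring]
      exact (even_two_mul _).neg_one_pow
    have hG : ∑ c ∈ Finset.range N, ggi (s+m+1) c * ((2*c).choose (c+s+1) : ℤ) = 1 := by
      rw [sum_shift _ (s+1) (s+m+1) N (by omega) hr
        (fun c hc => by rw [Nat.choose_eq_zero_of_lt (by omega)]; simp)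
        (fun c hc => by rw [ggi_zero hc, zero_mul]),
        show s+m+1+1-(s+1) = m+1 by omega]
      have hterm : ∀ d ∈ Finset.range (m+1),
          ggi (s+m+1) ((s+1)+d) * ((2*((s+1)+d)).choose (((s+1)+d)+s+1) : ℤ)
            = ((-1:ℤ)^(s+m+1+s+1)) * ((-1:ℤ)^d * (m.choose d : ℤ) * (((2*s+m+2)+d).choose m : ℤ)) := by
        intro d hd
        simp only [Finset.mem_range] at hd
        unfold ggi
        have hmul := chmul (s+m+1+((s+1)+d)) (2*s+d+2) d (by omega)
        rw [show (2*s+d+2)+d = 2*((s+1)+d) by ring,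
          show (s+m+1+((s+1)+d)) - (2*s+d+2) = m by omega] at hmul
        have hsymm : (s+m+1+((s+1)+d)).choose (2*s+d+2) = (s+m+1+((s+1)+d)).choose m := by
          have := Nat.choose_symm (n := s+m+1+((s+1)+d)) (k := 2*s+d+2) (by omega)
          rw [show s+m+1+((s+1)+d) - (2*s+d+2) = m by omega] at this
          exact this.symm
        have hcast : ((s+m+1+((s+1)+d)).choose (2*((s+1)+d)) : ℤ) * ((2*((s+1)+d)).choose (((s+1)+d)+s+1) : ℤ)
            = ((s+m+1+((s+1)+d)).choose m : ℤ) * (m.choose d : ℤ) := by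
          rw [show ((s+1)+d)+s+1 = 2*s+d+2 by ring, ← hsymm]
          exact_mod_cast congrArg (Nat.cast (R := ℤ)) hmul
        calc (-1:ℤ)^(s+m+1+((s+1)+d)) * ((s+m+1+((s+1)+d)).choose (2*((s+1)+d)) : ℤ) * ((2*((s+1)+d)).choose (((s+1)+d)+s+1) : ℤ)
            = (-1:ℤ)^(s+m+1+((s+1)+d)) * (((s+m+1+((s+1)+d)).choose (2*((s+1)+d)) : ℤ) * ((2*((s+1)+d)).choose (((s+1)+d)+s+1) : ℤ)) := by ring
          _ = (-1:ℤ)^(s+m+1+((s+1)+d)) * (((s+m+1+((s+1)+d)).choose m : ℤ) * (m.choose d : ℤ)) := by rw [hcast]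
          _ = ((-1:ℤ)^(s+m+1+s+1)) * ((-1:ℤ)^d * (m.choose d : ℤ) * (((2*s+m+2)+d).choose m : ℤ)) := by
              rw [show s+m+1+((s+1)+d) = (s+m+1+s+1)+d by ring, pow_add,
                show s+m+1+s+1+d = 2*s+m+2+d by ring]
              ring
      rw [Finset.sum_congr rfl hterm, ← Finset.mul_sum, starlemma m (2*s+m+2)]
      rw [← pow_add, show s+m+1+s+1+m = 2*(s+m+1) by ring]
      exact (even_two_mul _).neg_one_pow
    rw [hF, hG, sub_self]

lemma catalan_bbal (m : ℕ) : (catalan m : ℤ) = bbal m 0 := by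
  have h1 : (m+1) * catalan m = (2*m).choose m := succ_mul_catalan_eq_centralBinom m
  have h2 : (2*m).choose (m+1) * (m+1) = (2*m).choose m * m := by
    have := Nat.choose_succ_right_eq (2*m) m
    rwa [show 2*m - m = m by omega] at this
  have key : ((m:ℤ)+1) * (catalan m : ℤ) = ((m:ℤ)+1) * bbal m 0 := by
    unfold bbal
    rw [show m + 0 = m by ring, show m+0+1 = m+1 by ring]
    have c1 : ((m:ℤ)+1) * (catalan m : ℤ) = ((2*m).choose m : ℤ) := by exact_mod_cast congrArg (Nat.cast (R:=ℤ)) h1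
    have c2 : ((2*m).choose (m+1) : ℤ) * ((m:ℤ)+1) = ((2*m).choose m : ℤ) * m := by
      exact_mod_cast congrArg (Nat.cast (R:=ℤ)) h2
    nlinarith [c1, c2]
  exact mul_left_cancel₀ (by positivity) key

def SSconv (p q : ℕ) : ℤ := ∑ l ∈ Finset.range (p+q+1), bbal p l * bbal q l

lemma SSconv_comm (p q : ℕ) : SSconv p q = SSconv q p := by
  unfold SSconv
  rw [show q+p+1 = p+q+1 by ring]
  exact Finset.sum_congr rfl fun l _ => mul_comm _ _

lemma SSconv_expand (p q : ℕ) : SSconv p (q+1)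
    = (∑ l ∈ Finset.range (p+q+1), bbal p (l+1) * bbal q l)
      + (∑ l ∈ Finset.range (p+q+1), bbal p l * bbal q (l+1))
      + 2 * SSconv p q - bbal p 0 * bbal q 0 := by
  have e0 : SSconv p (q+1) = ∑ l ∈ Finset.range (p+q+2), bbal p l * bbal (q+1) l := by
    unfold SSconv; rw [show p+(q+1)+1 = p+q+2 by ring]
  rw [e0, Finset.sum_range_succ']
  have hterm : ∀ l ∈ Finset.range (p+q+1), bbal p (l+1) * bbal (q+1) (l+1)
      = bbal p (l+1) * bbal q l + 2 * (bbal p (l+1) * bbal q (l+1)) + bbal p (l+1) * bbal q (l+2) := by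
    intro l _; rw [bbal_rec]; ring
  rw [Finset.sum_congr rfl hterm, Finset.sum_add_distrib, Finset.sum_add_distrib, bbal_rec0]
  have hY : ∑ l ∈ Finset.range (p+q+1), 2 * (bbal p (l+1) * bbal q (l+1))
      = 2 * (SSconv p q - bbal p 0 * bbal q 0) := by
    have : ∑ l ∈ Finset.range (p+q+2), bbal p l * bbal q l = SSconv p q := by
      rw [Finset.sum_range_succ]
      unfold SSconv
      rw [bbal_zero (show p < p+q+1 by omega), zero_mul, add_zero]
    rw [← Finset.mul_sum]
    congr 1
    have h2 := Finset.sum_range_succ' (fun l => bbal p l * bbal q l) (p+q+1)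
    rw [this] at h2
    linarith [h2]
  have hZ : ∑ l ∈ Finset.range (p+q+1), bbal p (l+1) * bbal q (l+2)
      = (∑ l ∈ Finset.range (p+q+1), bbal p l * bbal q (l+1)) - bbal p 0 * bbal q 1 := by
    have h2 := Finset.sum_range_succ' (fun l => bbal p l * bbal q (l+1)) (p+q+1)
    have h3 : ∑ l ∈ Finset.range (p+q+2), bbal p l * bbal q (l+1)
        = ∑ l ∈ Finset.range (p+q+1), bbal p l * bbal q (l+1) := by
      rw [Finset.sum_range_succ, bbal_zero (show p < p+q+1 by omega), zero_mul, add_zero]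
    rw [h3] at h2
    linarith [h2]
  rw [hY, hZ]
  ring

lemma SSconv_step (p q : ℕ) : SSconv p (q+1) = SSconv (p+1) q := by
  rw [SSconv_expand p q, show SSconv (p+1) q = SSconv q (p+1) from SSconv_comm _ _, SSconv_expand q p]
  rw [show q+p+1 = p+q+1 by ring, SSconv_comm q p]
  have e1 : ∑ l ∈ Finset.range (p+q+1), bbal q (l+1) * bbal p l
      = ∑ l ∈ Finset.range (p+q+1), bbal p l * bbal q (l+1) :=
    Finset.sum_congr rfl fun l _ => mul_comm _ _
  have e2 : ∑ l ∈ Finset.range (p+q+1), bbal q l * bbal p (l+1)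
      = ∑ l ∈ Finset.range (p+q+1), bbal p (l+1) * bbal q l :=
    Finset.sum_congr rfl fun l _ => mul_comm _ _
  rw [e1, e2]
  ring

lemma SSconv_cat : ∀ q p, SSconv p q = (catalan (p+q) : ℤ) := by
  intro q
  induction q with
  | zero =>
    intro p
    unfold SSconv
    rw [Finset.sum_eq_single 0]
    · rw [show bbal 0 0 = 1 from bbal_diag 0, mul_one, catalan_bbal, show p+0 = p by ring]
    · intro l _ hl
      rw [bbal_zero (show 0 < l by omega), mul_zero]
    · intro h; exact absurd (Finset.mem_range.mpr (by omega)) h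
  | succ q ih =>
    intro p
    rw [SSconv_step p q, ih (p+1), show p+1+q = p+(q+1) by ring]

lemma conv_catalan (p q L : ℕ) (h : q < L) :
    ∑ l ∈ Finset.range L, bbal p l * bbal q l = (catalan (p+q) : ℤ) := by
  have e1 : ∑ l ∈ Finset.range L, bbal p l * bbal q l
      = ∑ l ∈ Finset.range (q+1), bbal p l * bbal q l := by
    refine (Finset.sum_subset (Finset.range_subset_range.mpr (by omega)) ?_).symm
    intro x _ hx
    simp only [Finset.mem_range] at hx
    rw [bbal_zero (show q < x by omega), mul_zero]
  have e2 : SSconv p q = ∑ l ∈ Finset.range (q+1), bbal p l * bbal q l := by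
    unfold SSconv
    refine (Finset.sum_subset (Finset.range_subset_range.mpr (by omega)) ?_).symm
    intro x _ hx
    simp only [Finset.mem_range] at hx
    rw [bbal_zero (show q < x by omega), mul_zero]
  rw [e1, ← e2, SSconv_cat]

lemma blockdet {m k : Type*} [Fintype m] [Fintype k] [DecidableEq m] [DecidableEq k]
    (M W : Matrix (m ⊕ k) (m ⊕ k) ℤ) (h : M * W = 1) :
    M.det * (W.toBlocks₂₂).det = (M.toBlocks₁₁).det := by
  have h' : Matrix.fromBlocks
        (M.toBlocks₁₁ * W.toBlocks₁₁ + M.toBlocks₁₂ * W.toBlocks₂₁)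
        (M.toBlocks₁₁ * W.toBlocks₁₂ + M.toBlocks₁₂ * W.toBlocks₂₂)
        (M.toBlocks₂₁ * W.toBlocks₁₁ + M.toBlocks₂₂ * W.toBlocks₂₁)
        (M.toBlocks₂₁ * W.toBlocks₁₂ + M.toBlocks₂₂ * W.toBlocks₂₂)
      = Matrix.fromBlocks 1 0 0 1 := by
    rw [← Matrix.fromBlocks_multiply, Matrix.fromBlocks_toBlocks, Matrix.fromBlocks_toBlocks,
      Matrix.fromBlocks_one]
    exact h
  have h12 : M.toBlocks₁₁ * W.toBlocks₁₂ + M.toBlocks₁₂ * W.toBlocks₂₂ = 0 := by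
    have := congrArg Matrix.toBlocks₁₂ h'
    simp only [Matrix.toBlocks_fromBlocks₁₂] at this
    exact this
  have h22 : M.toBlocks₂₁ * W.toBlocks₁₂ + M.toBlocks₂₂ * W.toBlocks₂₂ = 1 := by
    have := congrArg Matrix.toBlocks₂₂ h'
    simp only [Matrix.toBlocks_fromBlocks₂₂] at this
    exact this
  have key : M * Matrix.fromBlocks 1 (W.toBlocks₁₂) 0 (W.toBlocks₂₂)
      = Matrix.fromBlocks (M.toBlocks₁₁) 0 (M.toBlocks₂₁) 1 := by
    conv_lhs => rw [← Matrix.fromBlocks_toBlocks M]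
    rw [Matrix.fromBlocks_multiply]
    rw [h12, h22]
    simp
  have hdet := congrArg Matrix.det key
  rw [Matrix.det_mul, Matrix.det_fromBlocks_zero₂₁, Matrix.det_fromBlocks_zero₁₂] at hdet
  simp only [Matrix.det_one, one_mul, mul_one] at hdet
  exact hdet

lemma addRight_sign (m : ℕ) : ∀ j : ℕ,
    Equiv.Perm.sign (Equiv.addRight ((j : ℕ) : Fin (m+1))) = ((-1:ℤˣ)^m)^j := by
  intro j
  induction j with
  | zero =>
    have : Equiv.addRight ((0 : ℕ) : Fin (m+1)) = Equiv.refl _ := by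
      ext x; simp
    rw [this]
    simp
  | succ j ih =>
    have hc : (((j+1 : ℕ)) : Fin (m+1)) = ((j : ℕ) : Fin (m+1)) + 1 := by
      push_cast; ring
    have hsplit : Equiv.addRight (((j+1 : ℕ)) : Fin (m+1))
        = (Equiv.addRight ((j : ℕ) : Fin (m+1))).trans (Equiv.addRight (1 : Fin (m+1))) := by
      ext x; simp [hc, add_assoc]
    have hrot : Equiv.addRight (1 : Fin (m+1)) = finRotate (m+1) := by
      ext x; simp
    rw [hsplit, hrot]
    have : (Equiv.addRight ((j : ℕ) : Fin (m+1))).trans (finRotate (m+1))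
        = finRotate (m+1) * Equiv.addRight ((j : ℕ) : Fin (m+1)) := rfl
    rw [this, map_mul, sign_finRotate, ih]
    rw [pow_succ, mul_comm, Nat.add_sub_cancel]

lemma addRight_sign' (N : ℕ) [NeZero N] (j : ℕ) :
    Equiv.Perm.sign (Equiv.addRight ((j : ℕ) : Fin N)) = ((-1:ℤˣ)^(N-1))^j := by
  rcases N with _ | m
  · exact absurd rfl (NeZero.ne 0)
  · simpa using addRight_sign m j

lemma powpar (n k : ℕ) (hk : 0 < k) : ((-1:ℤ)^(n+k-1))^k = (-1:ℤ)^(n*k) := by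
  obtain ⟨k', rfl⟩ : ∃ k', k = k'+1 := ⟨k-1, by omega⟩
  rw [← pow_mul, show n+(k'+1)-1 = n+k' by omega,
    show (n+k')*(k'+1) = n*(k'+1) + k'*(k'+1) by ring, pow_add,
    (Nat.even_mul_succ_self k').neg_one_pow, mul_one]

lemma det_bbalT (m : ℕ) : (Matrix.of fun i j : Fin m => bbal j.1 i.1).det = 1 := by
  rw [Matrix.det_of_upperTriangular (M := Matrix.of fun i j : Fin m => bbal j.1 i.1)
    (fun i j hij => bbal_zero hij)]
  exact Finset.prod_eq_one fun l _ => bbal_diag l.1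

theorem stmt_9 (n k : ℕ) (hn : 0 < n) (hk : 0 < k) :
    Matrix.det (Matrix.of fun i j : Fin k => (catalan (n + i.1 + j.1) : ℤ)) =
      Matrix.det (Matrix.of fun i j : Fin n => ((k + i.1 + j.1).choose (2 * j.1) : ℤ)) := by
  haveI : NeZero (n+k) := ⟨by omega⟩
  set Mb : Matrix (Fin (n+k)) (Fin (n+k)) ℤ := Matrix.of (fun r c => bbal r.1 c.1) with hMb
  set Mg : Matrix (Fin (n+k)) (Fin (n+k)) ℤ := Matrix.of (fun r c => ggi r.1 c.1) with hMg
  have hGB : Mg * Mb = 1 := by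
    ext r s
    rw [Matrix.mul_apply, Matrix.one_apply]
    simp only [hMg, hMb, Matrix.of_apply]
    rw [Fin.sum_univ_eq_sum_range (fun c => ggi r.1 c * bbal c s.1) (n+k)]
    rw [keyA (n+k) r.1 s.1 r.isLt s.isLt]
    by_cases h : r = s
    · rw [if_pos (congrArg Fin.val h), if_pos h]
    · rw [if_neg (fun hh => h (Fin.ext hh)), if_neg h]
  have hBG : Mb * Mg = 1 := mul_eq_one_comm.mp hGB
  set ρ : (Fin k ⊕ Fin n) ≃ Fin (n+k) := (Equiv.sumComm (Fin k) (Fin n)).trans finSumFinEquiv with hρ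
  set γ : (Fin k ⊕ Fin n) ≃ Fin (n+k) :=
    finSumFinEquiv.trans (finCongr (by omega : k+n = n+k)) with hγ
  set M' := Mb.submatrix ρ γ with hM'
  set W' := Mg.submatrix γ ρ with hW'
  have hMW : M' * W' = 1 := by
    rw [hM', hW', Matrix.submatrix_mul_equiv, hBG, Matrix.submatrix_one_equiv]
  have hkey : M'.det * (W'.toBlocks₂₂).det = (M'.toBlocks₁₁).det := blockdet M' W' hMW
  -- value computations of the equivs
  have hρl : ∀ i : Fin k, (ρ (Sum.inl i)).1 = n + i.1 := by
    intro i; simp [hρ]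
  have hρr : ∀ j : Fin n, (ρ (Sum.inr j)).1 = j.1 := by
    intro j; simp [hρ]
  have hγl : ∀ j : Fin k, (γ (Sum.inl j)).1 = j.1 := by
    intro j; simp [hγ]
  have hγr : ∀ i : Fin n, (γ (Sum.inr i)).1 = k + i.1 := by
    intro i; simp [hγ]; omega
  -- block identifications
  have hA : M'.toBlocks₁₁ = Matrix.of (fun i j : Fin k => bbal (n+i.1) j.1) := by
    ext i j
    simp only [Matrix.toBlocks₁₁, hM', Matrix.submatrix_apply, hMb, Matrix.of_apply]
    rw [hρl i, hγl j]
  have hE : W'.toBlocks₂₂ = Matrix.of (fun i j : Fin n => ggi (k+i.1) j.1) := by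
    ext i j
    simp only [Matrix.toBlocks₂₂, hW', Matrix.submatrix_apply, hMg, Matrix.of_apply]
    rw [hγr i, hρr j]
  -- LHS = det A
  have hH : (Matrix.of fun i j : Fin k => (catalan (n + i.1 + j.1) : ℤ))
      = (M'.toBlocks₁₁) * (Matrix.of fun l j : Fin k => bbal j.1 l.1) := by
    ext i j
    rw [Matrix.mul_apply, hA]
    simp only [Matrix.of_apply]
    calc (catalan (n + i.1 + j.1) : ℤ)
        = ∑ l ∈ Finset.range k, bbal (n+i.1) l * bbal j.1 l := by
          rw [conv_catalan (n+i.1) j.1 k j.isLt, show n+i.1+j.1 = n+i.1+j.1 from rfl]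
      _ = ∑ l : Fin k, bbal (n+i.1) l.1 * bbal j.1 l.1 :=
          (Fin.sum_univ_eq_sum_range (fun l => bbal (n+i.1) l * bbal j.1 l) k).symm
  have hLHS : (Matrix.of fun i j : Fin k => (catalan (n + i.1 + j.1) : ℤ)).det
      = (M'.toBlocks₁₁).det := by
    rw [hH, Matrix.det_mul, det_bbalT, mul_one]
  -- det M'
  have hMbdet : Mb.det = 1 := by
    have ht : Mb.transpose = Matrix.of (fun i j : Fin (n+k) => bbal j.1 i.1) := by
      ext i j; simp [hMb, Matrix.transpose_apply]
    rw [← Matrix.det_transpose, ht, det_bbalT]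
  have hperm : ∀ y : Fin (n+k), γ (ρ.symm y) = y + ((k : ℕ) : Fin (n+k)) := by
    intro y
    obtain ⟨z, rfl⟩ := ρ.surjective y
    rw [Equiv.symm_apply_apply]
    have hkval : (((k:ℕ) : Fin (n+k))).1 = k := by
      rw [Fin.val_natCast, Nat.mod_eq_of_lt (by omega)]
    cases z with
    | inl i =>
      apply Fin.ext
      rw [Fin.val_add, hγl i, hρl i, hkval, show n+i.1+k = (n+k)+i.1 by omega,
        Nat.add_mod_left, Nat.mod_eq_of_lt (by omega)]
    | inr j =>
      apply Fin.ext
      rw [Fin.val_add, hγr j, hρr j, hkval, Nat.mod_eq_of_lt (by omega)]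
      omega
  have hM'eq : M' = (Mb.submatrix ρ ρ).submatrix (Equiv.refl (Fin k ⊕ Fin n)) (γ.trans ρ.symm) := by
    ext i j
    simp only [hM', Matrix.submatrix_apply, Equiv.refl_apply, Equiv.trans_apply,
      Equiv.apply_symm_apply]
  have hsgn : ((Equiv.Perm.sign (γ.trans ρ.symm) : ℤˣ) : ℤ) = (-1:ℤ)^(n*k) := by
    have hs1 : Equiv.Perm.sign (γ.trans ρ.symm)
        = Equiv.Perm.sign (Equiv.addRight ((k : ℕ) : Fin (n+k))) := by
      refine Equiv.Perm.sign_eq_sign_of_equiv _ _ γ ?_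
      intro x
      simp only [Equiv.trans_apply, Equiv.coe_addRight]
      exact hperm (γ x)
    rw [hs1, addRight_sign']
    push_cast
    exact powpar n k hk
  have hdetM' : M'.det = (-1:ℤ)^(n*k) := by
    rw [hM'eq]
    have := Matrix.det_permute' (γ.trans ρ.symm) (Mb.submatrix ρ ρ)
    rw [Matrix.det_submatrix_equiv_self, hMbdet, mul_one] at this
    rw [show ((Mb.submatrix ρ ρ).submatrix (Equiv.refl (Fin k ⊕ Fin n)) (γ.trans ρ.symm))
        = (Mb.submatrix ρ ρ).submatrix id (γ.trans ρ.symm) from rfl]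
    rw [this]
    exact_mod_cast hsgn
  -- det E
  set B : Matrix (Fin n) (Fin n) ℤ :=
    Matrix.of (fun i j : Fin n => ((k + i.1 + j.1).choose (2 * j.1) : ℤ)) with hB
  set C : Matrix (Fin n) (Fin n) ℤ :=
    Matrix.of (fun i j : Fin n => ((-1:ℤ)^(j.1)) * B i j) with hC
  have hEC : W'.toBlocks₂₂ = Matrix.of (fun i j : Fin n => ((-1:ℤ)^(k+i.1)) * C i j) := by
    rw [hE]
    ext i j
    simp only [Matrix.of_apply, hC, hB, Matrix.of_apply]
    unfold ggi
    rw [pow_add]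
    ring
  have hEdet : (W'.toBlocks₂₂).det = (-1:ℤ)^(n*k) * B.det := by
    rw [hEC, Matrix.det_mul_column, hC, Matrix.det_mul_row, ← mul_assoc]
    congr 1
    rw [← Finset.prod_mul_distrib]
    have hterm : ∀ i : Fin n, (-1:ℤ)^(k+i.1) * (-1:ℤ)^(i.1) = (-1:ℤ)^k := by
      intro i
      rw [pow_add, mul_assoc, ← mul_pow]
      norm_num
    rw [Finset.prod_congr rfl (fun i _ => hterm i), Finset.prod_const, Finset.card_univ,
      Fintype.card_fin, ← pow_mul, mul_comm k n]
  -- final chain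
  rw [hLHS, ← hkey, hdetM', hEdet, ← mul_assoc, ← mul_pow]
  norm_num
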